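/- Let P, Q ∈ ℂ^{2N×2N} be block S-parameter matrices with N×N blocks, and suppose I − Q_11 P_22 and I − P_22 Q_11 are invertible and P_21, Q_21, and R_21 = Q_21 (I − P_22 Q_11)⁻¹ P_21 are invertible, where R = 𝒮(P, Q) is the cascade S-parameter matrix with blocks R_11 = P_11 + P_12 (I − Q_11 P_22)⁻¹ Q_11 P_21, R_12 = P_12 (I − Q_11 P_22)⁻¹ Q_12, R_21 = Q_21 (I − P_22 Q_11)⁻¹ P_21, R_22 = Q_22 + Q_21 (I − P_22 Q_11)⁻¹ P_22 Q_12. Then 𝒯(R) = 𝒯(P) 𝒯(Q), i.e., the T-parameter matrix of the cascade equals the product of the individual T-parameter matrices. -/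
import Mathlib


open Matrix

set_option maxHeartbeats 1000000 in
/-- The T-parameter matrix of a cascade (Redheffer star product) equals the
product of the individual T-parameter matrices. -/
theorem T_of_cascade_eq_mul (N : ℕ)
    (p11 p12 p21 p22 q11 q12 q21 q22 : Matrix (Fin N) (Fin N) ℂ)
    (h1 : IsUnit (1 - q11 * p22)) (h2 : IsUnit (1 - p22 * q11))
    (hp : IsUnit p21) (hq : IsUnit q21)
    (hr : IsUnit (q21 * (1 - p22 * q11)⁻¹ * p21)) :
    (fromBlocks
      ((p12 * (1 - q11 * p22)⁻¹ * q12) -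
        (p11 + p12 * (1 - q11 * p22)⁻¹ * q11 * p21) *
          (q21 * (1 - p22 * q11)⁻¹ * p21)⁻¹ *
          (q22 + q21 * (1 - p22 * q11)⁻¹ * p22 * q12))
      ((p11 + p12 * (1 - q11 * p22)⁻¹ * q11 * p21) *
        (q21 * (1 - p22 * q11)⁻¹ * p21)⁻¹)
      (-((q21 * (1 - p22 * q11)⁻¹ * p21)⁻¹ *
        (q22 + q21 * (1 - p22 * q11)⁻¹ * p22 * q12)))
      ((q21 * (1 - p22 * q11)⁻¹ * p21)⁻¹)) =
    (fromBlocks (p12 - p11 * p21⁻¹ * p22) (p11 * p21⁻¹) (-(p21⁻¹ * p22)) (p21⁻¹)) *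
    (fromBlocks (q12 - q11 * q21⁻¹ * q22) (q11 * q21⁻¹) (-(q21⁻¹ * q22)) (q21⁻¹)) := by
  have hAd := (Matrix.isUnit_iff_isUnit_det _).mp h2
  have hBd := (Matrix.isUnit_iff_isUnit_det _).mp h1
  have hpd := (Matrix.isUnit_iff_isUnit_det _).mp hp
  have hqd := (Matrix.isUnit_iff_isUnit_det _).mp hq
  have hR : (q21 * (1 - p22 * q11)⁻¹ * p21)⁻¹ = p21⁻¹ * (1 - p22 * q11) * q21⁻¹ := by
    rw [Matrix.mul_inv_rev, Matrix.mul_inv_rev,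
      Matrix.nonsing_inv_nonsing_inv _ hAd, Matrix.mul_assoc]
  have hb : (1 - q11 * p22)⁻¹ = 1 + q11 * (1 - p22 * q11)⁻¹ * p22 := by
    apply Matrix.inv_eq_right_inv
    have h := Matrix.mul_nonsing_inv _ hAd
    calc (1 - q11 * p22) * (1 + q11 * (1 - p22 * q11)⁻¹ * p22)
        = 1 - q11 * p22 + q11 * ((1 - p22 * q11) * (1 - p22 * q11)⁻¹) * p22 := by
          noncomm_ring
      _ = 1 := by rw [h]; noncomm_ring
  have l1 : ∀ x : Matrix (Fin N) (Fin N) ℂ,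
      p22 * (q11 * ((1 - p22 * q11)⁻¹ * x)) = (1 - p22 * q11)⁻¹ * x - x := by
    intro x
    have hx : (1 - p22 * q11) * ((1 - p22 * q11)⁻¹ * x) = x := by
      rw [← Matrix.mul_assoc, Matrix.mul_nonsing_inv _ hAd, Matrix.one_mul]
    calc p22 * (q11 * ((1 - p22 * q11)⁻¹ * x))
        = (1 - p22 * q11)⁻¹ * x - (1 - p22 * q11) * ((1 - p22 * q11)⁻¹ * x) := by
          noncomm_ring
      _ = (1 - p22 * q11)⁻¹ * x - x := by rw [hx]
  have l1' : p22 * (q11 * (1 - p22 * q11)⁻¹) = (1 - p22 * q11)⁻¹ - 1 := by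
    simpa using l1 1
  have l2 : ∀ x : Matrix (Fin N) (Fin N) ℂ,
      (1 - p22 * q11)⁻¹ * (p22 * (q11 * x)) = (1 - p22 * q11)⁻¹ * x - x := by
    intro x
    have hx : (1 - p22 * q11)⁻¹ * ((1 - p22 * q11) * x) = x := by
      rw [← Matrix.mul_assoc, Matrix.nonsing_inv_mul _ hAd, Matrix.one_mul]
    calc (1 - p22 * q11)⁻¹ * (p22 * (q11 * x))
        = (1 - p22 * q11)⁻¹ * x - (1 - p22 * q11)⁻¹ * ((1 - p22 * q11) * x) := by
          noncomm_ring
      _ = (1 - p22 * q11)⁻¹ * x - x := by rw [hx]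
  have lp : ∀ x : Matrix (Fin N) (Fin N) ℂ, p21 * (p21⁻¹ * x) = x := by
    intro x; rw [← Matrix.mul_assoc, Matrix.mul_nonsing_inv _ hpd, Matrix.one_mul]
  have lp' : p21 * p21⁻¹ = 1 := Matrix.mul_nonsing_inv _ hpd
  have lq : ∀ x : Matrix (Fin N) (Fin N) ℂ, q21⁻¹ * (q21 * x) = x := by
    intro x; rw [← Matrix.mul_assoc, Matrix.nonsing_inv_mul _ hqd, Matrix.one_mul]
  have lq' : q21⁻¹ * q21 = 1 := Matrix.nonsing_inv_mul _ hqd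
  rw [Matrix.fromBlocks_multiply, hR, hb, Matrix.fromBlocks_inj]
  refine ⟨?_, ?_, ?_, ?_⟩
  · simp only [Matrix.mul_add, Matrix.add_mul, Matrix.mul_sub, Matrix.sub_mul,
      Matrix.mul_one, Matrix.one_mul, Matrix.neg_mul, Matrix.mul_neg,
      Matrix.mul_assoc, lp, lq, l1, l2, lp', lq', l1', Matrix.mul_one]
    noncomm_ring
  · simp only [Matrix.mul_add, Matrix.add_mul, Matrix.mul_sub, Matrix.sub_mul,
      Matrix.mul_one, Matrix.one_mul, Matrix.neg_mul, Matrix.mul_neg,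
      Matrix.mul_assoc, lp, lq, l1, l2, lp', lq', l1', Matrix.mul_one]
    noncomm_ring
  · simp only [Matrix.mul_add, Matrix.add_mul, Matrix.mul_sub, Matrix.sub_mul,
      Matrix.mul_one, Matrix.one_mul, Matrix.neg_mul, Matrix.mul_neg,
      Matrix.mul_assoc, lp, lq, l1, l2, lp', lq', l1', Matrix.mul_one]
    noncomm_ring
  · simp only [Matrix.mul_add, Matrix.add_mul, Matrix.mul_sub, Matrix.sub_mul,
      Matrix.mul_one, Matrix.one_mul, Matrix.neg_mul, Matrix.mul_neg,
      Matrix.mul_assoc, lp, lq, l1, l2, lp', lq', l1', Matrix.mul_one]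
    noncomm_ring
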